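/- arXiv:1803.09483 — 2 statements merged into one kernel-verified Lean document; each statement's English description precedes it below -/
import Mathlib

section
/- Let k be a positive integer, let G be a weighted graph in which every connected component C satisfies λ(C) ≤ k, and let Λ = ⟨λ_1,…,λ_t⟩ be a nondecreasing tuple with entries in ℕ∪{+∞} at least 2k+1 of which are strictly greater than k. Then (G,w,Λ,k) is a no-instance of CGWC, i.e., there is no F ⊆ E(G) with w(F) ≤ k such that G−F has exactly t connected components G_1,…,G_t with λ(G_i) ≥ λ_i for every i. -/
open scoped Classical

/-- The weighted connectivity of `(G,w)`: the largest `k ∈ ℕ∞` such that deleting any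
edge set of total weight at most `k - 1` leaves `G` connected (`+∞` for a one-vertex
graph). -/
noncomputable def weightConn {V : Type*} [Fintype V] (G : SimpleGraph V) (w : Sym2 V → ℕ) :
    ℕ∞ :=
  sSup {k : ℕ∞ | ∀ S : Finset (Sym2 V), ↑S ⊆ G.edgeSet →
    (∑ e ∈ S, (w e : ℕ∞)) < k → (G.deleteEdges ↑S).Connected}

/-- The weighted connectivity of the subgraph of `(G,w)` induced by the vertex set `C`. -/
noncomputable def compConn {V : Type*} [Fintype V] (G : SimpleGraph V) (w : Sym2 V → ℕ)
    (C : Set V) : ℕ∞ :=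
  weightConn (G.induce C) (fun e => w (Sym2.map Subtype.val e))

/-- The multiset of the weighted connectivities of the connected components of `(G,w)`. -/
noncomputable def connMultiset {V : Type*} [Fintype V] (G : SimpleGraph V)
    (w : Sym2 V → ℕ) : Multiset ℕ∞ :=
  (@Finset.univ G.ConnectedComponent (Fintype.ofFinite _)).val.map
    (fun c => compConn G w c.supp)

/-- `α ⪯ β` for multisets viewed as nondecreasing tuples: the tuples have the same length
and the `i`-th smallest entry of `α` is at most the `i`-th smallest entry of `β`. -/
def DomLE (α β : Multiset ℕ∞) : Prop :=
  List.Forall₂ (· ≤ ·) (α.sort (· ≤ ·)) (β.sort (· ≤ ·))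

/-- `(G,w,Λ,k)` is a yes-instance of CGWC: there is `F ⊆ E(G)` with `w(F) ≤ k` such that
`G - F` has exactly `Λ.card` connected components `G_1,…,G_t` with `λ(G_i) ≥ λ_i`
(where `Λ = ⟨λ_1 ≤ … ≤ λ_t⟩`). -/
def IsYes {V : Type*} [Fintype V] (G : SimpleGraph V) (w : Sym2 V → ℕ)
    (Λ : Multiset ℕ∞) (k : ℕ) : Prop :=
  ∃ F : Finset (Sym2 V), ↑F ⊆ G.edgeSet ∧ (∑ e ∈ F, w e) ≤ k ∧
    DomLE Λ (connMultiset (G.deleteEdges ↑F) w)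

private lemma countP_le_of_forall₂ (k : ℕ∞) :
    ∀ {l₁ l₂ : List ℕ∞}, List.Forall₂ (· ≤ ·) l₁ l₂ →
      l₁.countP (fun x => decide ((k : ℕ∞) < x)) ≤
        l₂.countP (fun x => decide ((k : ℕ∞) < x)) := by
  intro l₁ l₂ h
  induction h with
  | nil => simp
  | @cons a b l₁ l₂ hab _ ih =>
    simp only [List.countP_cons]
    by_cases hka : (k : ℕ∞) < a
    · have hkb : (k : ℕ∞) < b := lt_of_lt_of_le hka hab
      simp [hka, hkb]; omega
    · by_cases hkb : (k : ℕ∞) < b <;> simp [hka, hkb] <;> omega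

/-- Let `k` be a positive integer and `G` a weighted graph all of whose connected
components have weighted connectivity at most `k`. If at least `2k+1` entries of the
nondecreasing tuple `Λ` are strictly greater than `k`, then `(G,w,Λ,k)` is a no-instance
of CGWC. -/
theorem stmt_16 {V : Type*} [Fintype V] (G : SimpleGraph V) (w : Sym2 V → ℕ)
    (hw : ∀ e ∈ G.edgeSet, 0 < w e) (k : ℕ) (hk : 0 < k)
    (hcomp : ∀ c : G.ConnectedComponent, compConn G w c.supp ≤ (k : ℕ∞))
    (Λ : Multiset ℕ∞) (hΛ : 2 * k + 1 ≤ (Λ.filter (fun x => (k : ℕ∞) < x)).card) :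
    ¬ IsYes G w Λ k := by
  rintro ⟨F, hF, hwF, hdom⟩
  set G' := G.deleteEdges (↑F : Set (Sym2 V)) with hG'
  letI instC : Fintype G'.ConnectedComponent := Fintype.ofFinite _
  set p : ℕ∞ → Prop := fun x => (k : ℕ∞) < x with hp
  -- Step 1: at least 2k+1 components of G' have compConn > k
  have h1 : 2 * k + 1 ≤ ((connMultiset G' w).filter p).card := by
    have e1 : (Λ.filter p).card = (Λ.sort (· ≤ ·)).countP (fun x => decide (p x)) := by
      rw [← Multiset.countP_eq_card_filter, ← Multiset.sort_eq Λ (· ≤ ·),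
        Multiset.coe_countP, Multiset.sort_eq]
    have e2 : ((connMultiset G' w).filter p).card
        = ((connMultiset G' w).sort (· ≤ ·)).countP (fun x => decide (p x)) := by
      rw [← Multiset.countP_eq_card_filter, ← Multiset.sort_eq (connMultiset G' w) (· ≤ ·),
        Multiset.coe_countP, Multiset.sort_eq]
    calc 2 * k + 1 ≤ (Λ.filter p).card := hΛ
      _ ≤ _ := by rw [e1, e2]; exact countP_le_of_forall₂ k hdom
  -- rewrite as a Finset count
  set T : Finset G'.ConnectedComponent :=
    Finset.filter (fun c => p (compConn G' w c.supp)) Finset.univ with hT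
  have h2 : 2 * k + 1 ≤ T.card := by
    have : ((connMultiset G' w).filter p).card = T.card := by
      rw [connMultiset, ← Multiset.countP_eq_card_filter, Multiset.countP_map]
      rfl
    omega
  -- Step 2: every component in T touches an edge of F
  have key : ∀ c ∈ T, ∃ e ∈ F, ∃ x, x ∈ c.supp ∧ x ∈ e := by
    intro c hc
    by_contra hcon
    push_neg at hcon
    obtain ⟨v, hv⟩ := c.exists_rep
    have hvs : v ∈ c.supp := (SimpleGraph.ConnectedComponent.mem_supp_iff c v).2 hv
    -- the support is closed under G-adjacency
    have hstep : ∀ x y, x ∈ c.supp → G.Adj x y → y ∈ c.supp := by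
      intro x y hx hxy
      have hne : s(x, y) ∉ (↑F : Set (Sym2 V)) := by
        intro hmem
        exact hcon _ hmem x hx (Sym2.mem_mk_left x y)
      have hadj : G'.Adj x y := by
        rw [hG', SimpleGraph.deleteEdges_adj]
        exact ⟨hxy, hne⟩
      rw [SimpleGraph.ConnectedComponent.mem_supp_iff] at hx ⊢
      rw [← hx]
      exact SimpleGraph.ConnectedComponent.connectedComponentMk_eq_of_adj hadj.symm
    have hwalk : ∀ x y, x ∈ c.supp → G.Walk x y → y ∈ c.supp := by
      intro x y hx pw
      induction pw with
      | nil => exact hx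
      | cons h q ih => exact ih (hstep _ _ hx h)
    -- supp of c equals supp of the G-component of v
    have hsupp : (G.connectedComponentMk v).supp = c.supp := by
      ext u
      simp only [SimpleGraph.ConnectedComponent.mem_supp_iff]
      constructor
      · intro hu
        obtain ⟨pw⟩ := (SimpleGraph.ConnectedComponent.eq.1 hu)
        exact (SimpleGraph.ConnectedComponent.mem_supp_iff c u).1
          (hwalk v u hvs pw.reverse) |>.symm ▸ rfl
      · intro hu
        have : G'.Reachable u v := SimpleGraph.ConnectedComponent.exact (hu.trans hv.symm)
        exact SimpleGraph.ConnectedComponent.sound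
          (this.mono (hG' ▸ SimpleGraph.deleteEdges_le (↑F : Set (Sym2 V))))
    -- induced graphs agree
    have hind : G'.induce c.supp = G.induce c.supp := by
      ext ⟨x, hx⟩ ⟨y, hy⟩
      simp only [SimpleGraph.comap_adj, Function.Embedding.coe_subtype, hG',
        SimpleGraph.deleteEdges_adj]
      exact ⟨fun h => h.1, fun h => ⟨h, fun hmem => hcon _ hmem x hx (Sym2.mem_mk_left x y)⟩⟩
    have hlt : (k : ℕ∞) < compConn G' w c.supp := by
      have := Finset.mem_filter.1 hc
      exact this.2
    have hle : compConn G' w c.supp ≤ (k : ℕ∞) := by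
      have h1 : compConn G' w c.supp = compConn G w c.supp := by
        unfold compConn; rw [hind]
      rw [h1, ← hsupp]
      exact hcomp _
    exact absurd hle (not_le.2 hlt)
  -- Step 3: counting
  classical
  have hVne : Nonempty (Sym2 V) := by
    obtain ⟨c, hc⟩ := Finset.card_pos.1 (by omega : 0 < T.card)
    obtain ⟨e, heF, _⟩ := key c hc
    exact ⟨e⟩
  choose g hgF xx hxx hxe using key
  let g' : G'.ConnectedComponent → Sym2 V := fun c =>
    if h : c ∈ T then g c h else Classical.arbitrary _
  have hmaps : ∀ c ∈ T, g' c ∈ F := by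
    intro c hc; simp only [g', dif_pos hc]; exact hgF c hc
  have hfiber : ∀ e ∈ F, (T.filter (fun c => g' c = e)).card ≤ 2 := by
    intro e heF
    induction e using Sym2.ind with
    | _ a b =>
      have hsub : T.filter (fun c => g' c = s(a, b)) ⊆
          {G'.connectedComponentMk a, G'.connectedComponentMk b} := by
        intro c hc
        obtain ⟨hcT, hce⟩ := Finset.mem_filter.1 hc
        have hx : xx c hcT ∈ c.supp := hxx c hcT
        have hxe' : xx c hcT ∈ g c hcT := hxe c hcT
        rw [show g c hcT = g' c from (dif_pos hcT).symm, hce, Sym2.mem_iff] at hxe'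
        rw [SimpleGraph.ConnectedComponent.mem_supp_iff] at hx
        rcases hxe' with rfl | rfl
        · exact Finset.mem_insert.2 (Or.inl hx.symm)
        · exact Finset.mem_insert.2 (Or.inr (Finset.mem_singleton.2 hx.symm))
      calc (T.filter (fun c => g' c = s(a, b))).card
          ≤ ({G'.connectedComponentMk a, G'.connectedComponentMk b} :
              Finset G'.ConnectedComponent).card := Finset.card_le_card hsub
        _ ≤ 2 := Finset.card_insert_le _ _ |>.trans (by simp)
  have hTcard : T.card ≤ 2 * F.card :=
    Finset.card_le_mul_card_image_of_maps_to hmaps 2 hfiber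
  have hFcard : F.card ≤ ∑ e ∈ F, w e := by
    calc F.card = ∑ _e ∈ F, 1 := by simp
      _ ≤ ∑ e ∈ F, w e := Finset.sum_le_sum (fun e he => hw e (hF he))
  omega
end

section
/- Let G be a weighted graph, let Λ = ⟨λ_1,…,λ_t⟩ be a nondecreasing tuple with entries in ℕ∪{+∞}, and let k be a nonnegative integer. Let C be a connected component of G with λ(C) > k, suppose some entry of Λ is at most λ(C), and let λ_j be the largest such entry. Then (G,w,Λ,k) is a yes-instance of CGWC if and only if (G−V(C), w, Λ', k) is a yes-instance of CGWC, where Λ' is the (t−1)-tuple obtained from Λ by removing the entry λ_j. -/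
open scoped Classical

/-- pairing extraction -/
lemma rel_exists_erase {α β : Multiset ℕ∞} (h : Multiset.Rel (· ≤ ·) α β)
    {a : ℕ∞} (ha : a ∈ α) :
    ∃ b ∈ β, a ≤ b ∧ Multiset.Rel (· ≤ ·) (α.erase a) (β.erase b) := by
  induction h with
  | zero => simp at ha
  | @cons a' b' s t hab hst ih =>
    by_cases hEq : a = a'
    · subst hEq
      exact ⟨b', by simp, hab, by simpa using hst⟩
    · have ha' : a ∈ s := by
        rcases Multiset.mem_cons.mp ha with h | h
        · exact absurd h hEq
        · exact h
      obtain ⟨b, hb, hab2, hrel⟩ := ih ha'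
      refine ⟨b, Multiset.mem_cons_of_mem hb, hab2, ?_⟩
      rw [Multiset.erase_cons_tail _ (by exact fun h => hEq h.symm)]
      by_cases hbb : b = b'
      · subst hbb
        rw [Multiset.erase_cons_head]
        rw [← Multiset.cons_erase hb]
        exact Multiset.Rel.cons hab hrel
      · rw [Multiset.erase_cons_tail _ (by exact fun h => hbb h.symm)]
        exact Multiset.Rel.cons hab hrel

/-- erase a "maximal-below-b" element from the left and `b` from the right. -/
lemma relE {α β : Multiset ℕ∞} (h : Multiset.Rel (· ≤ ·) α β)
    {a b : ℕ∞} (ha : a ∈ α) (hb : b ∈ β)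
    (hcond : ∀ x ∈ α, x ≤ b → x ≤ a) :
    Multiset.Rel (· ≤ ·) (α.erase a) (β.erase b) := by
  rw [← Multiset.cons_erase hb] at h
  obtain ⟨x, α', hxb, hrel, hα⟩ := Multiset.rel_cons_right.mp h
  subst hα
  by_cases hax : a = x
  · subst hax
    simpa using hrel
  · have ha' : a ∈ α' := by
      rcases Multiset.mem_cons.mp ha with h | h
      · exact absurd h hax
      · exact h
    obtain ⟨y, hy, hay, hrel'⟩ := rel_exists_erase hrel ha'
    have hxa : x ≤ a := hcond x (Multiset.mem_cons_self _ _) hxb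
    rw [Multiset.erase_cons_tail _ (fun h => hax h.symm), ← Multiset.cons_erase hy]
    exact Multiset.Rel.cons (le_trans hxa hay) hrel'

/-- erase arbitrary left element and the minimum on the right. -/
lemma relE2 {α β : Multiset ℕ∞} (h : Multiset.Rel (· ≤ ·) α β)
    {a b : ℕ∞} (ha : a ∈ α) (hb : b ∈ β)
    (hmin : ∀ y ∈ β, b ≤ y) :
    Multiset.Rel (· ≤ ·) (α.erase a) (β.erase b) := by
  rw [← Multiset.cons_erase hb] at h
  obtain ⟨x, α', hxb, hrel, hα⟩ := Multiset.rel_cons_right.mp h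
  subst hα
  by_cases hax : a = x
  · subst hax
    simpa using hrel
  · have ha' : a ∈ α' := by
      rcases Multiset.mem_cons.mp ha with h | h
      · exact absurd h hax
      · exact h
    obtain ⟨y, hy, _, hrel'⟩ := rel_exists_erase hrel ha'
    have hby : b ≤ y := hmin y (Multiset.mem_of_mem_erase hy)
    rw [Multiset.erase_cons_tail _ (fun h => hax h.symm), ← Multiset.cons_erase hy]
    exact Multiset.Rel.cons (le_trans hxb hby) hrel'

lemma forall₂_of_rel : ∀ (l1 l2 : List ℕ∞), l1.Pairwise (· ≤ ·) → l2.Pairwise (· ≤ ·) →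
    Multiset.Rel (· ≤ ·) (l1 : Multiset ℕ∞) (l2 : Multiset ℕ∞) → List.Forall₂ (· ≤ ·) l1 l2 := by
  intro l1
  induction l1 with
  | nil => intro l2 _ _ h
           have := Multiset.card_eq_card_of_rel h
           simp at this
           rw [List.eq_nil_of_length_eq_zero this.symm]
           exact List.Forall₂.nil
  | cons a l1' ih =>
    intro l2 h1 h2 h
    cases l2 with
    | nil => have := Multiset.card_eq_card_of_rel h; simp at this
    | cons b l2' =>
      have hab : a ≤ b := by
        have hmem : ((a :: l1' : List ℕ∞) : Multiset ℕ∞) = a ::ₘ ↑l1' := rfl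
        rw [hmem] at h
        obtain ⟨x, α', hxb, hrel, hα⟩ := Multiset.rel_cons_right.mp
          (by rw [show ((b :: l2' : List ℕ∞) : Multiset ℕ∞) = b ::ₘ (l2' : Multiset ℕ∞) from rfl] at h; exact h)
        have hx : x ∈ a ::ₘ (l1' : Multiset ℕ∞) := by rw [hα]; exact Multiset.mem_cons_self _ _
        have hax : a ≤ x := by
          rcases Multiset.mem_cons.mp hx with h' | h'
          · exact le_of_eq h'.symm
          · exact (List.pairwise_cons.mp h1).1 x (by simpa using h')
        exact le_trans hax hxb
      have htail : Multiset.Rel (· ≤ ·) (l1' : Multiset ℕ∞) (l2' : Multiset ℕ∞) := by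
        have := relE2 h (a := a) (b := b) (by simp) (by simp)
          (by intro y hy
              rcases (by simpa using hy : y = b ∨ y ∈ l2') with h' | h'
              · exact le_of_eq h'.symm
              · exact (List.pairwise_cons.mp h2).1 y h')
        simpa using this
      exact List.Forall₂.cons hab (ih l2' (List.pairwise_cons.mp h1).2 (List.pairwise_cons.mp h2).2 htail)

lemma rel_of_forall₂ {l1 l2 : List ℕ∞} (h : List.Forall₂ (· ≤ ·) l1 l2) :
    Multiset.Rel (· ≤ ·) (l1 : Multiset ℕ∞) (l2 : Multiset ℕ∞) := by
  induction h with
  | nil => exact Multiset.Rel.zero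
  | cons hab _ ih => exact Multiset.Rel.cons hab ih

lemma domLE_iff_rel {α β : Multiset ℕ∞} :
    DomLE α β ↔ Multiset.Rel (· ≤ ·) α β := by
  constructor
  · intro h
    have := rel_of_forall₂ h
    rwa [Multiset.sort_eq, Multiset.sort_eq] at this
  · intro h
    exact forall₂_of_rel _ _ (Multiset.pairwise_sort _ _) (Multiset.pairwise_sort _ _)
      (by rwa [Multiset.sort_eq, Multiset.sort_eq])

lemma weightConn_le_iso {V V' : Type*} [Fintype V] [Fintype V']
    {G : SimpleGraph V} {G' : SimpleGraph V'}
    {w : Sym2 V → ℕ} {w' : Sym2 V' → ℕ} (e : G ≃g G')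
    (hw : ∀ x, w' (Sym2.map ⇑e x) = w x) : weightConn G w ≤ weightConn G' w' := by
  apply sSup_le_sSup
  intro k hk
  intro S' hS' hsum
  set emb : Sym2 V' ↪ Sym2 V := ⟨Sym2.map ⇑e.symm, Sym2.map.injective e.symm.injective⟩
  set S : Finset (Sym2 V) := S'.map emb with hS
  have hmapval : ∀ y : Sym2 V', Sym2.map ⇑e (Sym2.map ⇑e.symm y) = y := by
    intro y
    induction y with
    | _ u v => simp [Sym2.map_pair_eq]
  have hwsymm : ∀ y : Sym2 V', w (Sym2.map ⇑e.symm y) = w' y := by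
    intro y
    rw [← hw (Sym2.map ⇑e.symm y), hmapval]
  have hSE : ↑S ⊆ G.edgeSet := by
    intro x hx
    rw [Finset.mem_coe, hS, Finset.mem_map] at hx
    obtain ⟨y, hy, rfl⟩ := hx
    have := hS' (Finset.mem_coe.mpr hy)
    induction y with
    | _ u v =>
      rw [SimpleGraph.mem_edgeSet] at this
      simpa [emb] using (e.symm.map_adj_iff.mpr this)
  have hsum2 : (∑ x ∈ S, (w x : ℕ∞)) < k := by
    rw [hS, Finset.sum_map]
    simp only [emb, Function.Embedding.coeFn_mk]
    simpa only [hwsymm] using hsum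
  have hconn := hk S hSE hsum2
  have hmemiff : ∀ x : V, ∀ y : V, (s(e x, e y) ∈ S') ↔ s(x,y) ∈ S := by
    intro x y
    constructor
    · intro h
      rw [hS]
      have : emb s(e x, e y) = s(x, y) := by
        simp [emb, Sym2.map_pair_eq]
      rw [← this]
      exact Finset.mem_map_of_mem _ h
    · intro h
      rw [hS, Finset.mem_map] at h
      obtain ⟨z, hz, hze⟩ := h
      have h2 : Sym2.map ⇑e (emb z) = s(e x, e y) := by rw [hze]; simp [Sym2.map_pair_eq]
      simp only [emb, Function.Embedding.coeFn_mk, hmapval z] at h2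
      rwa [h2] at hz
  have iso2 : G.deleteEdges ↑S ≃g G'.deleteEdges ↑S' := by
    refine ⟨e.toEquiv, ?_⟩
    intro x y
    show (G'.deleteEdges ↑S').Adj (e x) (e y) ↔ (G.deleteEdges ↑S).Adj x y
    simp only [SimpleGraph.deleteEdges_adj, Finset.mem_coe]
    rw [e.map_adj_iff]
    constructor
    · rintro ⟨h1, h2⟩; exact ⟨h1, fun hm => h2 ((hmemiff x y).mpr hm)⟩
    · rintro ⟨h1, h2⟩; exact ⟨h1, fun hm => h2 ((hmemiff x y).mp hm)⟩
  exact iso2.connected_iff.mp hconn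

lemma weightConn_iso {V V' : Type*} [Fintype V] [Fintype V']
    {G : SimpleGraph V} {G' : SimpleGraph V'}
    {w : Sym2 V → ℕ} {w' : Sym2 V' → ℕ} (e : G ≃g G')
    (hw : ∀ x, w' (Sym2.map ⇑e x) = w x) : weightConn G w = weightConn G' w' := by
  refine le_antisymm (weightConn_le_iso e hw) (weightConn_le_iso e.symm ?_)
  intro x
  rw [← hw (Sym2.map ⇑e.symm x)]
  congr 1
  induction x with
  | _ u v => simp [Sym2.map_pair_eq]

lemma compConn_image {V : Type*} [Fintype V] (G : SimpleGraph V) (w : Sym2 V → ℕ)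
    (s : Set V) (t : Set ↥s) :
    compConn (G.induce s) (fun e => w (Sym2.map Subtype.val e)) t
      = compConn G w (Subtype.val '' t) := by
  apply weightConn_iso (e := ⟨(Equiv.Set.image Subtype.val t Subtype.val_injective), ?_⟩)
  · intro x
    induction x with
    | _ u v => simp [Sym2.map_pair_eq, Equiv.Set.image_apply]; rfl
  · intro a b
    simp [SimpleGraph.comap_adj, Equiv.Set.image_apply]

lemma compConn_univ {V : Type*} [Fintype V] (G : SimpleGraph V) (w : Sym2 V → ℕ) :
    compConn G w Set.univ = weightConn G w := by
  apply weightConn_iso (e := ⟨Equiv.Set.univ V, ?_⟩)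
  · intro x
    induction x with
    | _ u v => simp [Sym2.map_pair_eq]
  · intro a b
    simp [SimpleGraph.comap_adj]

lemma deleteEdges_connected_of_lt {V : Type*} [Fintype V] {G : SimpleGraph V}
    {w : Sym2 V → ℕ} (S : Finset (Sym2 V)) (hS : ↑S ⊆ G.edgeSet)
    (h : (∑ e ∈ S, (w e : ℕ∞)) < weightConn G w) : (G.deleteEdges ↑S).Connected := by
  rw [weightConn, lt_sSup_iff] at h
  obtain ⟨m, hm, hlt⟩ := h
  exact hm S hS hlt

lemma connected_of_pos {V : Type*} [Fintype V] {G : SimpleGraph V}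
    {w : Sym2 V → ℕ} (h : 0 < weightConn G w) : G.Connected := by
  have := deleteEdges_connected_of_lt (G := G) (w := w) ∅ (by simp) (by simpa using h)
  simpa using this

lemma weightConn_deleteEdges_le {V : Type*} [Fintype V] (G : SimpleGraph V)
    (w : Sym2 V → ℕ) (s : Set (Sym2 V)) :
    weightConn (G.deleteEdges s) w ≤ weightConn G w := by
  apply sSup_le_sSup
  intro k hk U hU hsum
  set T : Finset (Sym2 V) := U.filter (fun e => e ∉ s) with hT
  have hTE : ↑T ⊆ (G.deleteEdges s).edgeSet := by
    intro x hx
    rw [Finset.mem_coe, hT, Finset.mem_filter] at hx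
    rw [SimpleGraph.edgeSet_deleteEdges]
    exact ⟨hU (Finset.mem_coe.mpr hx.1), hx.2⟩
  have hTsum : (∑ e ∈ T, (w e : ℕ∞)) < k :=
    lt_of_le_of_lt (Finset.sum_le_sum_of_subset (Finset.filter_subset _ _)) hsum
  have hconn := hk T hTE hTsum
  rw [SimpleGraph.deleteEdges_deleteEdges] at hconn
  refine hconn.mono (SimpleGraph.deleteEdges_anti ?_)
  intro x hx
  rcases Classical.em (x ∈ s) with h | h
  · exact Set.mem_union_left _ h
  · exact Set.mem_union_right _ (by rw [Finset.coe_filter]; exact ⟨Finset.mem_coe.mp hx, h⟩)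

lemma connMultiset_eq_sum {V : Type*} [Fintype V] (G : SimpleGraph V) (w : Sym2 V → ℕ)
    [inst : Fintype G.ConnectedComponent] :
    connMultiset G w = ∑ c : G.ConnectedComponent, {compConn G w c.supp} := by
  have huniv : (@Finset.univ _ (Fintype.ofFinite G.ConnectedComponent))
      = @Finset.univ _ inst := by congr 1; exact Subsingleton.elim _ _
  rw [connMultiset, huniv]
  have key : ∀ (m : Multiset G.ConnectedComponent) (f : G.ConnectedComponent → ℕ∞),
      m.map f = (m.map (fun c => ({f c} : Multiset ℕ∞))).sum := by
    intro m f
    rw [show (fun c => ({f c} : Multiset ℕ∞)) = (fun a => ({a} : Multiset ℕ∞)) ∘ f from rfl,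
      ← Multiset.map_map, Multiset.sum_map_singleton]
  rw [key]
  rfl

lemma walk_mem_of_closed {V : Type*} {H : SimpleGraph V} {A : Set V}
    (hA : ∀ u v, H.Adj u v → (u ∈ A ↔ v ∈ A)) :
    ∀ {u v : V}, H.Walk u v → u ∈ A → v ∈ A := by
  intro u v p
  induction p with
  | nil => exact id
  | cons h p ih => exact fun hu => ih ((hA _ _ h).mp hu)

lemma reach_mem_of_closed {V : Type*} {H : SimpleGraph V} {A : Set V}
    (hA : ∀ u v, H.Adj u v → (u ∈ A ↔ v ∈ A)) {u v : V}
    (h : H.Reachable u v) (hu : u ∈ A) : v ∈ A := by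
  obtain ⟨p⟩ := h
  exact walk_mem_of_closed hA p hu

lemma walk_induce_reachable {V : Type*} {H : SimpleGraph V} {A : Set V}
    (hA : ∀ u v, H.Adj u v → (u ∈ A ↔ v ∈ A)) :
    ∀ {u v : V}, H.Walk u v → ∀ (hu : u ∈ A) (hv : v ∈ A),
      (H.induce A).Reachable ⟨u, hu⟩ ⟨v, hv⟩ := by
  intro u v p
  induction p with
  | nil => intro hu hv; rfl
  | @cons u u' v h p ih =>
    intro hu hv
    have hu' : u' ∈ A := (hA _ _ h).mp hu
    exact (SimpleGraph.Adj.reachable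
      (show (H.induce A).Adj ⟨u, hu⟩ ⟨u', hu'⟩ from h)).trans (ih hu' hv)

lemma supp_map_induce {V : Type*} {H : SimpleGraph V} {A : Set V}
    (hA : ∀ u v, H.Adj u v → (u ∈ A ↔ v ∈ A)) (a : (H.induce A).ConnectedComponent) :
    (a.map (SimpleGraph.Embedding.induce A).toHom).supp = Subtype.val '' a.supp := by
  induction a using SimpleGraph.ConnectedComponent.ind with
  | _ x =>
  ext v
  rw [SimpleGraph.ConnectedComponent.map_mk]
  constructor
  · intro hv
    rw [SimpleGraph.ConnectedComponent.mem_supp_iff] at hv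
    have hr : H.Reachable v ↑x := SimpleGraph.ConnectedComponent.eq.mp hv
    have hvA : v ∈ A := reach_mem_of_closed hA hr.symm x.2
    refine ⟨⟨v, hvA⟩, ?_, rfl⟩
    rw [SimpleGraph.ConnectedComponent.mem_supp_iff, SimpleGraph.ConnectedComponent.eq]
    obtain ⟨p⟩ := hr
    exact walk_induce_reachable hA p hvA x.2
  · rintro ⟨y, hy, rfl⟩
    rw [SimpleGraph.ConnectedComponent.mem_supp_iff, SimpleGraph.ConnectedComponent.eq] at hy ⊢
    exact hy.map (SimpleGraph.Embedding.induce A).toHom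

lemma connMultiset_decomp {V : Type*} [Fintype V] (H : SimpleGraph V) (w : Sym2 V → ℕ)
    (A : Set V) [Fintype ↥A] [Fintype ↥(Aᶜ)]
    (hA : ∀ u v, H.Adj u v → (u ∈ A ↔ v ∈ A)) :
    connMultiset H w
      = connMultiset (H.induce A) (fun e => w (Sym2.map Subtype.val e))
        + connMultiset (H.induce Aᶜ) (fun e => w (Sym2.map Subtype.val e)) := by
  haveI iH : Fintype H.ConnectedComponent := Fintype.ofFinite _
  haveI iA : Fintype (H.induce A).ConnectedComponent := Fintype.ofFinite _
  haveI iB : Fintype (H.induce Aᶜ).ConnectedComponent := Fintype.ofFinite _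
  have hA' : ∀ u v, H.Adj u v → (u ∈ Aᶜ ↔ v ∈ Aᶜ) := by
    intro u v h
    simpa using not_iff_not.mpr (hA u v h)
  set φ : (H.induce A).ConnectedComponent ⊕ (H.induce Aᶜ).ConnectedComponent →
      H.ConnectedComponent :=
    Sum.elim (SimpleGraph.ConnectedComponent.map (SimpleGraph.Embedding.induce A).toHom)
      (SimpleGraph.ConnectedComponent.map (SimpleGraph.Embedding.induce Aᶜ).toHom) with hφ
  have hsupp : ∀ y, (φ y).supp = Sum.elim
      (fun a => Subtype.val '' (SimpleGraph.ConnectedComponent.supp a))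
      (fun b => Subtype.val '' (SimpleGraph.ConnectedComponent.supp b)) y := by
    rintro (a | b)
    · exact supp_map_induce hA a
    · exact supp_map_induce hA' b
  have hbij : Function.Bijective φ := by
    constructor
    · rintro (a | a) (b | b) hab
      · induction a using SimpleGraph.ConnectedComponent.ind with | _ x =>
        induction b using SimpleGraph.ConnectedComponent.ind with | _ y =>
        simp only [hφ, Sum.elim_inl, SimpleGraph.ConnectedComponent.map_mk] at hab
        have hr : H.Reachable ↑x ↑y := SimpleGraph.ConnectedComponent.eq.mp hab
        obtain ⟨p⟩ := hr
        congr 1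
        rw [SimpleGraph.ConnectedComponent.eq]
        exact walk_induce_reachable hA p x.2 y.2
      · induction a using SimpleGraph.ConnectedComponent.ind with | _ x =>
        induction b using SimpleGraph.ConnectedComponent.ind with | _ y =>
        simp only [hφ, Sum.elim_inl, Sum.elim_inr,
          SimpleGraph.ConnectedComponent.map_mk] at hab
        have hr : H.Reachable ↑x ↑y := SimpleGraph.ConnectedComponent.eq.mp hab
        exact absurd (reach_mem_of_closed hA hr x.2) y.2
      · induction a using SimpleGraph.ConnectedComponent.ind with | _ x =>
        induction b using SimpleGraph.ConnectedComponent.ind with | _ y =>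
        simp only [hφ, Sum.elim_inl, Sum.elim_inr,
          SimpleGraph.ConnectedComponent.map_mk] at hab
        have hr : H.Reachable ↑x ↑y := SimpleGraph.ConnectedComponent.eq.mp hab
        exact absurd y.2 (reach_mem_of_closed hA' hr x.2)
      · induction a using SimpleGraph.ConnectedComponent.ind with | _ x =>
        induction b using SimpleGraph.ConnectedComponent.ind with | _ y =>
        simp only [hφ, Sum.elim_inr, SimpleGraph.ConnectedComponent.map_mk] at hab
        have hr : H.Reachable ↑x ↑y := SimpleGraph.ConnectedComponent.eq.mp hab
        obtain ⟨p⟩ := hr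
        congr 1
        rw [SimpleGraph.ConnectedComponent.eq]
        exact walk_induce_reachable hA' p x.2 y.2
    · intro c
      induction c using SimpleGraph.ConnectedComponent.ind with | _ v =>
      by_cases hv : v ∈ A
      · exact ⟨Sum.inl ((H.induce A).connectedComponentMk ⟨v, hv⟩), by
          simp [hφ, SimpleGraph.ConnectedComponent.map_mk]⟩
      · exact ⟨Sum.inr ((H.induce Aᶜ).connectedComponentMk ⟨v, hv⟩), by
          simp [hφ, SimpleGraph.ConnectedComponent.map_mk]⟩
  set eqv := Equiv.ofBijective φ hbij with heqv
  rw [connMultiset_eq_sum H w, connMultiset_eq_sum (H.induce A) _,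
    connMultiset_eq_sum (H.induce Aᶜ) _]
  rw [← Equiv.sum_comp eqv (fun c => ({compConn H w c.supp} : Multiset ℕ∞))]
  rw [Fintype.sum_sum_type]
  congr 1
  · apply Finset.sum_congr rfl
    intro a _
    have h1 : eqv (Sum.inl a) = φ (Sum.inl a) := rfl
    rw [h1, hsupp]
    simp only [Sum.elim_inl]
    rw [← compConn_image]
    congr!
  · apply Finset.sum_congr rfl
    intro b _
    have h1 : eqv (Sum.inr b) = φ (Sum.inr b) := rfl
    rw [h1, hsupp]
    simp only [Sum.elim_inr]
    rw [← compConn_image]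
    congr!

lemma connMultiset_connected {V : Type*} [Fintype V] {G : SimpleGraph V} (w : Sym2 V → ℕ)
    (h : G.Connected) : connMultiset G w = {weightConn G w} := by
  haveI : Fintype G.ConnectedComponent := Fintype.ofFinite _
  haveI hne : Nonempty V := h.nonempty
  haveI : Unique G.ConnectedComponent := by
    refine ⟨⟨G.connectedComponentMk (Classical.arbitrary V)⟩, ?_⟩
    intro c
    induction c using SimpleGraph.ConnectedComponent.ind with | _ v =>
    exact SimpleGraph.ConnectedComponent.sound (h.preconnected v _)
  rw [connMultiset_eq_sum, Finset.univ_unique, Finset.sum_singleton]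
  have hsupp : (default : G.ConnectedComponent).supp = Set.univ := by
    ext v
    simp only [SimpleGraph.ConnectedComponent.mem_supp_iff, Set.mem_univ, iff_true]
    exact Subsingleton.elim _ _
  rw [hsupp, compConn_univ]

/-- Let `C` be a connected component of the weighted graph `G` with `λ(C) > k`, suppose
some entry of the nondecreasing tuple `Λ` is at most `λ(C)` and let `λ_j` be the largest
such entry. Then `(G,w,Λ,k)` is a yes-instance of CGWC iff `(G − V(C), w, Λ', k)` is,
where `Λ'` is obtained from `Λ` by removing the entry `λ_j`. -/
theorem stmt_17 {V : Type*} [Fintype V] (G : SimpleGraph V) (w : Sym2 V → ℕ)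
    (hw : ∀ e ∈ G.edgeSet, 0 < w e) (Λ : Multiset ℕ∞) (k : ℕ)
    (c : G.ConnectedComponent) (hc : (k : ℕ∞) < compConn G w c.supp)
    (lj : ℕ∞) (hlj : lj ∈ Λ) (hle : lj ≤ compConn G w c.supp)
    (hmax : ∀ x ∈ Λ, x ≤ compConn G w c.supp → x ≤ lj) :
    IsYes G w Λ k ↔
      IsYes (G.induce c.suppᶜ) (fun e => w (Sym2.map Subtype.val e)) (Λ.erase lj) k := by
  set A := c.supp with hAdef
  have hcompA : weightConn (G.induce A) (fun e => w (Sym2.map Subtype.val e))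
      = compConn G w A := rfl
  have hclosedG : ∀ u v, G.Adj u v → (u ∈ A ↔ v ∈ A) := by
    intro u v h
    have h2 := SimpleGraph.ConnectedComponent.sound h.reachable
    simp only [hAdef, SimpleGraph.ConnectedComponent.mem_supp_iff]
    rw [h2]
  constructor
  · rintro ⟨F, hFE, hFw, hdom⟩
    set H := G.deleteEdges (↑F) with hH
    have hclosedH : ∀ u v, H.Adj u v → (u ∈ A ↔ v ∈ A) :=
      fun u v h => hclosedG u v (SimpleGraph.deleteEdges_le _ h)
    set FA : Finset (Sym2 ↥A) :=
      Finset.univ.filter (fun e => Sym2.map Subtype.val e ∈ F) with hFA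
    set FB : Finset (Sym2 ↥(Aᶜ)) :=
      Finset.univ.filter (fun e => Sym2.map Subtype.val e ∈ F) with hFB
    have hHA : H.induce A = (G.induce A).deleteEdges ↑FA := by
      ext x y
      show H.Adj ↑x ↑y ↔ _
      simp only [hH, SimpleGraph.deleteEdges_adj, SimpleGraph.comap_adj,
        Finset.mem_coe, hFA, Finset.mem_filter, Finset.mem_univ, true_and,
        Sym2.map_pair_eq]
      rfl
    have hHB : H.induce Aᶜ = (G.induce Aᶜ).deleteEdges ↑FB := by
      ext x y
      show H.Adj ↑x ↑y ↔ _
      simp only [hH, SimpleGraph.deleteEdges_adj, SimpleGraph.comap_adj,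
        Finset.mem_coe, hFB, Finset.mem_filter, Finset.mem_univ, true_and,
        Sym2.map_pair_eq]
      rfl
    have hsumA : ∑ e ∈ FA, w (Sym2.map Subtype.val e) ≤ k := by
      refine le_trans ?_ hFw
      have hmapsum : ∑ x ∈ FA.map ⟨Sym2.map Subtype.val, Sym2.map.injective Subtype.val_injective⟩, w x
          = ∑ e ∈ FA, w (Sym2.map Subtype.val e) := by
        rw [Finset.sum_map]
        rfl
      rw [← hmapsum]
      apply Finset.sum_le_sum_of_subset
      intro x hx
      rw [Finset.mem_map] at hx
      obtain ⟨e, he, rfl⟩ := hx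
      rw [hFA, Finset.mem_filter] at he
      exact he.2
    have hsumB : ∑ e ∈ FB, w (Sym2.map Subtype.val e) ≤ k := by
      refine le_trans ?_ hFw
      have hmapsum : ∑ x ∈ FB.map ⟨Sym2.map Subtype.val, Sym2.map.injective Subtype.val_injective⟩, w x
          = ∑ e ∈ FB, w (Sym2.map Subtype.val e) := by
        rw [Finset.sum_map]
        rfl
      rw [← hmapsum]
      apply Finset.sum_le_sum_of_subset
      intro x hx
      rw [Finset.mem_map] at hx
      obtain ⟨e, he, rfl⟩ := hx
      rw [hFB, Finset.mem_filter] at he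
      exact he.2
    have hFAE : ↑FA ⊆ (G.induce A).edgeSet := by
      intro e he
      rw [Finset.mem_coe, hFA, Finset.mem_filter] at he
      induction e with
      | _ x y =>
        have := hFE (Finset.mem_coe.mpr (by simpa [Sym2.map_pair_eq] using he.2))
        rw [SimpleGraph.mem_edgeSet] at this ⊢
        exact this
    have hFBE : ↑FB ⊆ (G.induce Aᶜ).edgeSet := by
      intro e he
      rw [Finset.mem_coe, hFB, Finset.mem_filter] at he
      induction e with
      | _ x y =>
        have := hFE (Finset.mem_coe.mpr (by simpa [Sym2.map_pair_eq] using he.2))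
        rw [SimpleGraph.mem_edgeSet] at this ⊢
        exact this
    have hconnA : (H.induce A).Connected := by
      rw [hHA]
      apply deleteEdges_connected_of_lt FA hFAE
      rw [hcompA, ← Nat.cast_sum]
      exact lt_of_le_of_lt (by exact_mod_cast hsumA) hc
    set w1 : Sym2 ↥A → ℕ := fun e => w (Sym2.map Subtype.val e) with hw1
    set w2 : Sym2 ↥(Aᶜ) → ℕ := fun e => w (Sym2.map Subtype.val e) with hw2
    set mD : ℕ∞ := weightConn (H.induce A) w1 with hmD
    have hsingle : connMultiset (H.induce A) w1 = {mD} := connMultiset_connected w1 hconnA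
    have hmDle : mD ≤ compConn G w A := by
      rw [hmD, hHA, ← hcompA]
      exact weightConn_deleteEdges_le _ _ _
    have hdecomp := connMultiset_decomp H w A hclosedH
    rw [← hw1, ← hw2] at hdecomp
    have hrel : Multiset.Rel (· ≤ ·) Λ (mD ::ₘ connMultiset (H.induce Aᶜ) w2) := by
      have := domLE_iff_rel.mp hdom
      rwa [hdecomp, hsingle, Multiset.singleton_add] at this
    have hrel2 := relE hrel hlj (Multiset.mem_cons_self _ _)
      (fun x hx hxb => hmax x hx (le_trans hxb hmDle))
    rw [Multiset.erase_cons_head] at hrel2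
    refine ⟨FB, hFBE, hsumB, ?_⟩
    rw [← hHB]
    exact domLE_iff_rel.mpr hrel2
  · rintro ⟨F', hF'E, hF'w, hdom'⟩
    set emb : Sym2 ↥(Aᶜ) ↪ Sym2 V :=
      ⟨Sym2.map Subtype.val, Sym2.map.injective Subtype.val_injective⟩ with hemb
    set F : Finset (Sym2 V) := F'.map emb with hF
    have hFE : ↑F ⊆ G.edgeSet := by
      intro x hx
      rw [Finset.mem_coe, hF, Finset.mem_map] at hx
      obtain ⟨e, he, rfl⟩ := hx
      have := hF'E (Finset.mem_coe.mpr he)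
      induction e with
      | _ u v =>
        rw [SimpleGraph.mem_edgeSet] at this
        show Sym2.map Subtype.val s(u, v) ∈ G.edgeSet
        rw [Sym2.map_pair_eq, SimpleGraph.mem_edgeSet]
        exact this
    have hFw : ∑ e ∈ F, w e ≤ k := by
      rw [hF, Finset.sum_map]
      exact hF'w
    set H := G.deleteEdges (↑F) with hH
    have hclosedH : ∀ u v, H.Adj u v → (u ∈ A ↔ v ∈ A) :=
      fun u v h => hclosedG u v (SimpleGraph.deleteEdges_le _ h)
    have hFout : ∀ x y : V, x ∈ A → s(x, y) ∉ (↑F : Set (Sym2 V)) := by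
      intro x y hx hmem
      rw [Finset.mem_coe, hF, Finset.mem_map] at hmem
      obtain ⟨e, he, hEq⟩ := hmem
      induction e with
      | _ u v =>
        have : emb s(u, v) = s((u : V), (v : V)) := by simp [hemb, Sym2.map_pair_eq]
        rw [this] at hEq
        rw [Sym2.eq_iff] at hEq
        rcases hEq with ⟨h1, _⟩ | ⟨_, h2⟩
        · exact u.2 (h1 ▸ hx)
        · exact v.2 (h2 ▸ hx)
    have hHA : H.induce A = G.induce A := by
      ext x y
      show H.Adj ↑x ↑y ↔ G.Adj ↑x ↑y
      rw [hH, SimpleGraph.deleteEdges_adj]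
      exact ⟨fun h => h.1, fun h => ⟨h, hFout ↑x ↑y x.2⟩⟩
    have hHB : H.induce Aᶜ = (G.induce Aᶜ).deleteEdges ↑F' := by
      ext x y
      show H.Adj ↑x ↑y ↔ _
      rw [hH, SimpleGraph.deleteEdges_adj, SimpleGraph.deleteEdges_adj]
      have hmem : s((x : V), (y : V)) ∈ F ↔ s(x, y) ∈ F' := by
        rw [hF]
        have : emb s(x, y) = s((x : V), (y : V)) := by simp [hemb, Sym2.map_pair_eq]
        rw [← this]
        exact Finset.mem_map' emb
      simp only [Finset.mem_coe, hmem]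
      rfl
    set w1 : Sym2 ↥A → ℕ := fun e => w (Sym2.map Subtype.val e) with hw1
    set w2 : Sym2 ↥(Aᶜ) → ℕ := fun e => w (Sym2.map Subtype.val e) with hw2
    have hconnA : (G.induce A).Connected := by
      apply connected_of_pos (w := w1)
      rw [hcompA]
      exact lt_of_le_of_lt zero_le hc
    have hsingle : connMultiset (H.induce A) w1 = {compConn G w A} := by
      rw [hHA, connMultiset_connected w1 hconnA, hcompA]
    have hdecomp := connMultiset_decomp H w A hclosedH
    rw [← hw1, ← hw2] at hdecomp
    have hrel : Multiset.Rel (· ≤ ·) Λ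
        (compConn G w A ::ₘ connMultiset ((G.induce Aᶜ).deleteEdges ↑F') w2) := by
      rw [← Multiset.cons_erase hlj]
      exact Multiset.Rel.cons hle (domLE_iff_rel.mp hdom')
    refine ⟨F, hFE, hFw, ?_⟩
    apply domLE_iff_rel.mpr
    rw [← hH, hdecomp, hsingle, hHB, Multiset.singleton_add]
    exact hrel
end
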